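/- Let H be a graph on the vertex set of the box B_{m+√n} ⊆ Z^d such that every connected component of H intersects both B_m and the boundary of B_{m+√n}. Then every union W of connected components of H which is nontrivial (i.e., both W and its complement within the vertex set contain at least one component) has, for every integer r with m < r < m+√n, at least one lattice edge between W and its complement whose endpoint v ∈ W satisfies ‖v‖_∞ = r. -/

import Mathlib

/-- Vertices of the lattice `ℤ^d`. -/
abbrev LatV (d : ℕ) := Fin d → ℤ

/-- Two vertices of `ℤ^d` are adjacent (form an edge) if at ℓ¹-distance 1. -/
def latAdj {d : ℕ} (u v : LatV d) : Prop := (∑ i, |u i - v i|) = 1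

/-- `x` lies in the box `[-k,k]^d + z`. -/
def inBox {d : ℕ} (k : ℕ) (z x : LatV d) : Prop := ∀ i, |x i - z i| ≤ (k : ℤ)

/-- The edge `(x,y)` belongs to `Q_k^z`: both endpoints in `[-k,k]^d + z` and
no coordinate `ℓ` with `x ℓ = y ℓ = z ℓ - k`. -/
def inQ {d : ℕ} (k : ℕ) (z x y : LatV d) : Prop :=
  inBox k z x ∧ inBox k z y ∧ ¬ ∃ ℓ, x ℓ = z ℓ - (k : ℤ) ∧ y ℓ = z ℓ - (k : ℤ)

/-- `z ∈ (2kℤ)^d`. -/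
def isMult {d : ℕ} (k : ℕ) (z : LatV d) : Prop := ∀ i, (2 * (k : ℤ)) ∣ z i

/-- Sup-norm of a lattice vertex. -/
def supNorm {d : ℕ} (v : LatV d) : ℕ := Finset.univ.sup fun i => (v i).natAbs

/-- `r_w`: number of coordinates of `w` congruent to `k` mod `2k`. -/
def rFun {d : ℕ} (k : ℕ) (w : LatV d) : ℕ :=
  (Finset.univ.filter fun ℓ => (2 * (k : ℤ)) ∣ (w ℓ - (k : ℤ))).card

lemma latAdj_symm {d} {u v : LatV d} (h : latAdj u v) : latAdj v u := by
  unfold latAdj at *; simpa [abs_sub_comm] using h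

lemma supNorm_le_iff {d} {v : LatV d} {k : ℕ} : supNorm v ≤ k ↔ ∀ i, (v i).natAbs ≤ k := by
  simp [supNorm, Finset.sup_le_iff]

lemma supNorm_eq {d} {v : LatV d} {k : ℕ} (h1 : ∀ i, (v i).natAbs ≤ k)
    {j : Fin d} (h2 : (v j).natAbs = k) : supNorm v = k := by
  refine le_antisymm (supNorm_le_iff.mpr h1) ?_
  rw [← h2]
  exact Finset.le_sup (f := fun i => (v i).natAbs) (Finset.mem_univ j)

lemma exists_supNorm {d} (hd : 0 < d) (v : LatV d) : ∃ j, (v j).natAbs = supNorm v := by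
  have hne : (Finset.univ : Finset (Fin d)).Nonempty := ⟨⟨0, hd⟩, Finset.mem_univ _⟩
  obtain ⟨j, _, hj⟩ := Finset.exists_mem_eq_sup Finset.univ hne (fun i => (v i).natAbs)
  exact ⟨j, hj.symm⟩

lemma latAdj_update {d} (u : LatV d) (j : Fin d) (e : ℤ) (he : e.natAbs = 1) :
    latAdj u (Function.update u j (u j + e)) := by
  unfold latAdj
  rw [Finset.sum_eq_single j]
  · have h1 : u j - Function.update u j (u j + e) j = -e := by
      rw [Function.update_self]; ring
    rw [h1, abs_neg, Int.abs_eq_natAbs, he]; rfl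
  · intro i _ hij; rw [Function.update_of_ne hij, sub_self, abs_zero]
  · intro h; exact absurd (Finset.mem_univ j) h

lemma latAdj_step {d} {u v : LatV d} (h : latAdj u v) :
    supNorm v ≤ supNorm u + 1 := by
  have hterm : ∀ i : Fin d, (u i - v i).natAbs ≤ 1 := by
    intro i
    have h2 := Finset.single_le_sum (f := fun i => |u i - v i|)
      (fun i _ => abs_nonneg _) (Finset.mem_univ i)
    rw [h] at h2
    have h2' : |u i - v i| ≤ 1 := h2
    rw [Int.abs_eq_natAbs] at h2'
    exact_mod_cast h2'
  apply Finset.sup_le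
  intro i _
  have h3 : (v i).natAbs ≤ (u i).natAbs + 1 := by have := hterm i; omega
  calc (v i).natAbs ≤ (u i).natAbs + 1 := h3
    _ ≤ supNorm u + 1 :=
      Nat.add_le_add_right (Finset.le_sup (f := fun i => (u i).natAbs) (Finset.mem_univ i)) 1

/-- The sphere graph: the graph induced by the lattice on `{‖·‖_∞ = r}`. -/
def sphG (d r : ℕ) : SimpleGraph (LatV d) where
  Adj u v := latAdj u v ∧ supNorm u = r ∧ supNorm v = r
  symm := ⟨fun u v ⟨h, h1, h2⟩ => ⟨latAdj_symm h, h2, h1⟩⟩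
  loopless := ⟨fun u ⟨h, _, _⟩ => by simp [latAdj] at h⟩

lemma moveCoord {d r : ℕ} (j : Fin d) (b : ℤ) (hb : b.natAbs ≤ r) :
    ∀ n (u : LatV d), (b - u j).natAbs = n →
      (∀ i, (u i).natAbs ≤ r) → (∃ i, i ≠ j ∧ (u i).natAbs = r) →
      (sphG d r).Reachable u (Function.update u j b) := by
  intro n
  induction n with
  | zero =>
    intro u h0 _ _
    have hb' : b = u j := by omega
    rw [hb', Function.update_eq_self]
  | succ n ih =>
    intro u hn hle hpin
    have hne : b ≠ u j := by omega
    set e : ℤ := if u j < b then 1 else -1 with he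
    set u' := Function.update u j (u j + e) with hu'
    have hu'j : u' j = u j + e := Function.update_self _ _ _
    have he1 : e.natAbs = 1 := by rw [he]; split <;> rfl
    have h1 : (b - u' j).natAbs = n := by
      rw [hu'j, he]; split <;> omega
    have hle' : ∀ i, (u' i).natAbs ≤ r := by
      intro i
      by_cases hij : i = j
      · subst hij; rw [hu'j, he]
        have := hle i
        split <;> omega
      · rw [hu', Function.update_of_ne hij]; exact hle i
    have hpin' : ∃ i, i ≠ j ∧ (u' i).natAbs = r := by
      obtain ⟨i, hij, hir⟩ := hpin
      exact ⟨i, hij, by rw [hu', Function.update_of_ne hij]; exact hir⟩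
    obtain ⟨i0, hi0j, hi0⟩ := hpin
    have hadj : (sphG d r).Adj u u' :=
      ⟨latAdj_update u j e he1, supNorm_eq hle hi0,
        supNorm_eq hle' (by rw [hu', Function.update_of_ne hi0j]; exact hi0)⟩
    have hrest := ih u' h1 hle' hpin'
    rw [hu', Function.update_idem] at hrest
    exact hadj.reachable.trans hrest

lemma reach_corner {d r : ℕ} (hd : 2 ≤ d) (u : LatV d) (hu : supNorm u = r) :
    (sphG d r).Reachable u (fun _ => (r : ℤ)) := by
  have hle : ∀ i, (u i).natAbs ≤ r := supNorm_le_iff.mp hu.le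
  obtain ⟨j, hj⟩ := exists_supNorm (by omega) u
  rw [hu] at hj
  have key : ∀ S : Finset (Fin d), j ∉ S →
      (sphG d r).Reachable u (fun x => if x ∈ S then (r : ℤ) else u x) := by
    intro S
    induction S using Finset.induction_on with
    | empty => intro _; exact SimpleGraph.Reachable.refl _
    | @insert i S hiS ih =>
      intro hjm
      have hji : j ≠ i ∧ j ∉ S := by
        constructor
        · intro h; exact hjm (h ▸ Finset.mem_insert_self i S)
        · intro h; exact hjm (Finset.mem_insert_of_mem h)
      have h1 := ih hji.2
      set uS : LatV d := fun x => if x ∈ S then (r : ℤ) else u x with huS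
      have hleS : ∀ x, (uS x).natAbs ≤ r := by
        intro x; rw [huS]; dsimp only; split
        · simp
        · exact hle x
      have hpinS : ∃ x, x ≠ i ∧ (uS x).natAbs = r := by
        refine ⟨j, hji.1, ?_⟩
        rw [huS]; dsimp only; rw [if_neg hji.2]; exact hj
      have h2 : (sphG d r).Reachable uS (Function.update uS i (r : ℤ)) :=
        moveCoord i (r : ℤ) (by simp) _ uS rfl hleS hpinS
      have h3 : Function.update uS i (r : ℤ) =
          (fun x => if x ∈ insert i S then (r : ℤ) else u x) := by
        funext x
        by_cases hxi : x = i
        · subst hxi; rw [Function.update_self, if_pos (Finset.mem_insert_self x S)]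
        · rw [Function.update_of_ne hxi]
          show (if x ∈ S then (r : ℤ) else u x) = _
          simp only [Finset.mem_insert]
          by_cases hxS : x ∈ S
          · rw [if_pos hxS, if_pos (Or.inr hxS)]
          · rw [if_neg hxS, if_neg (by tauto)]
      rw [h3] at h2
      exact h1.trans h2
  have h1 := key (Finset.univ.erase j) (Finset.notMem_erase j _)
  set uE : LatV d := fun x => if x ∈ Finset.univ.erase j then (r : ℤ) else u x with huE
  haveI : Nontrivial (Fin d) := Fin.nontrivial_iff_two_le.mpr hd
  obtain ⟨i, hi⟩ := exists_ne j
  have hleE : ∀ x, (uE x).natAbs ≤ r := by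
    intro x; rw [huE]; dsimp only; split
    · simp
    · exact hle x
  have hpinE : ∃ x, x ≠ j ∧ (uE x).natAbs = r := by
    refine ⟨i, hi, ?_⟩
    rw [huE]; dsimp only
    rw [if_pos (Finset.mem_erase.mpr ⟨hi, Finset.mem_univ i⟩)]
    simp
  have h2 : (sphG d r).Reachable uE (Function.update uE j (r : ℤ)) :=
    moveCoord j (r : ℤ) (by simp) _ uE rfl hleE hpinE
  have h3 : Function.update uE j (r : ℤ) = (fun _ => (r : ℤ)) := by
    funext x
    by_cases hxj : x = j
    · subst hxj; rw [Function.update_self]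
    · rw [Function.update_of_ne hxj]
      show (if x ∈ Finset.univ.erase j then (r : ℤ) else u x) = _
      rw [if_pos (Finset.mem_erase.mpr ⟨hxj, Finset.mem_univ x⟩)]
  rw [h3] at h2
  exact h1.trans h2

lemma sphere_reach {d r : ℕ} (hd : 2 ≤ d) {u v : LatV d}
    (hu : supNorm u = r) (hv : supNorm v = r) : (sphG d r).Reachable u v :=
  (reach_corner hd u hu).trans (reach_corner hd v hv).symm

lemma cross_walk {V : Type*} {G : SimpleGraph V} (P : V → Prop) :
    ∀ {a b : V} (_ : G.Walk a b), P a → ¬ P b →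
      ∃ x y, G.Adj x y ∧ P x ∧ ¬ P y := by
  intro a b p
  induction p with
  | nil => intro h h'; exact absurd h h'
  | @cons a c b h q ih =>
    intro ha hb
    by_cases hc : P c
    · exact ih hc hb
    · exact ⟨a, c, h, ha, hc⟩

/-- Let `H` be a subgraph of the lattice on the vertex set of the box `B_{m+s} ⊆ ℤ^d`
(`d ≥ 2`) such that every connected component of `H` meets both `B_m` and the boundary
`{‖·‖_∞ = m+s}`. Then for every nontrivial union `W` of connected components of `H`
and every level `r` with `m < r < m+s`, there is a lattice edge from a vertex `v ∈ W`
with `‖v‖_∞ = r` to a vertex outside `W`. -/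
theorem boundary_edge_at_every_level (d m s : ℕ) (hd : 2 ≤ d)
    (H : SimpleGraph {v : LatV d // supNorm v ≤ m + s})
    (hlat : ∀ a b, H.Adj a b → latAdj a.1 b.1)
    (hcross : ∀ v : {v : LatV d // supNorm v ≤ m + s},
      ∃ x y, H.Reachable v x ∧ H.Reachable v y ∧
        supNorm x.1 ≤ m ∧ supNorm y.1 = m + s)
    (W : Set {v : LatV d // supNorm v ≤ m + s})
    (hWcomp : ∀ a b, H.Reachable a b → (a ∈ W ↔ b ∈ W))
    (hWne : ∃ a, a ∈ W) (hWne' : ∃ b, b ∉ W) :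
    ∀ r : ℕ, m < r → r < m + s →
      ∃ v u : {v : LatV d // supNorm v ≤ m + s},
        v ∈ W ∧ u ∉ W ∧ latAdj u.1 v.1 ∧ supNorm v.1 = r := by
  intro r hmr hrs
  -- discrete intermediate value theorem along walks in H
  have ivt : ∀ {x y : {v : LatV d // supNorm v ≤ m + s}} (_ : H.Walk x y),
      supNorm x.1 ≤ r → r ≤ supNorm y.1 →
      ∃ v, H.Reachable x v ∧ supNorm v.1 = r := by
    intro x y p
    induction p with
    | nil =>
      intro hx hy
      exact ⟨_, SimpleGraph.Reachable.refl _, le_antisymm hx hy⟩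
    | @cons a b c h q ih =>
      intro hx hy
      by_cases har : supNorm a.1 = r
      · exact ⟨a, SimpleGraph.Reachable.refl _, har⟩
      · have hlt : supNorm a.1 < r := lt_of_le_of_ne hx har
        have hb : supNorm b.1 ≤ r := by
          have := latAdj_step (hlat a b h)
          omega
        obtain ⟨v, hv, hvr⟩ := ih hb hy
        exact ⟨v, h.reachable.trans hv, hvr⟩
  -- find a vertex of W at level r
  have findlvl : ∀ a : {v : LatV d // supNorm v ≤ m + s},
      ∃ v, H.Reachable a v ∧ supNorm v.1 = r := by
    intro a
    obtain ⟨x, y, hrx, hry, hxm, hyms⟩ := hcross a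
    obtain ⟨p⟩ := hrx.symm.trans hry
    obtain ⟨v, hv, hvr⟩ := ivt p (by omega) (by omega)
    exact ⟨v, hrx.trans hv, hvr⟩
  obtain ⟨a0, ha0⟩ := hWne
  obtain ⟨b0, hb0⟩ := hWne'
  obtain ⟨va, hvaR, hvar⟩ := findlvl a0
  obtain ⟨vb, hvbR, hvbr⟩ := findlvl b0
  have hva : va ∈ W := (hWcomp a0 va hvaR).mp ha0
  have hvb : vb ∉ W := fun h => hb0 ((hWcomp b0 vb hvbR).mpr h)
  -- connect `va` and `vb` along the sphere and find the crossing edge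
  obtain ⟨q⟩ := sphere_reach hd hvar hvbr
  set P : LatV d → Prop := fun w => ∃ h : supNorm w ≤ m + s, (⟨w, h⟩ : _) ∈ W with hP
  have hPa : P va.1 := ⟨va.2, hva⟩
  have hPb : ¬ P vb.1 := by rintro ⟨h, hmem⟩; exact hvb hmem
  obtain ⟨x, y, ⟨hxy, hxr, hyr⟩, hPx, hPy⟩ := cross_walk P q hPa hPb
  have hxle : supNorm x ≤ m + s := by omega
  have hyle : supNorm y ≤ m + s := by omega
  refine ⟨⟨x, hxle⟩, ⟨y, hyle⟩, ?_, ?_, latAdj_symm hxy, hxr⟩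
  · obtain ⟨h, hmem⟩ := hPx; exact hmem
  · intro h; exact hPy ⟨hyle, h⟩
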